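/- Assume μ > 0 and 3λ + 2μ > 0 and let ω = (ω₁, ω₂, 0) be a unit vector. Then the vector q₁⁺ := (ω₂, −ω₁, 0, −iμω₂, iμω₁, 0) ∈ ℂ⁶ satisfies K⁰ q₁⁺ = i q₁⁺, and its componentwise complex conjugate q₁⁻ satisfies K⁰ q₁⁻ = −i q₁⁻. -/

import Mathlib

open Matrix

noncomputable section

/-- Isotropic elasticity tensor `C_{ijkl} = λ δ_{ij} δ_{kl} + μ (δ_{ik} δ_{jl} + δ_{il} δ_{jk})`. -/
def isoC (lam mu : ℝ) (i j k l : Fin 3) : ℝ :=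
  lam * (if i = j then (1:ℝ) else 0) * (if k = l then (1:ℝ) else 0)
    + mu * ((if i = k then (1:ℝ) else 0) * (if j = l then (1:ℝ) else 0)
      + (if i = l then (1:ℝ) else 0) * (if j = k then (1:ℝ) else 0))

/-- The matrix `⟨ξ,ζ⟩` with entries `⟨ξ,ζ⟩_{ik} = Σ_{j,l} C_{ijkl} ξ_j ζ_l`. -/
def bil (lam mu : ℝ) (ξ ζ : Fin 3 → ℝ) : Matrix (Fin 3) (Fin 3) ℝ :=
  Matrix.of fun i k => ∑ j, ∑ l, isoC lam mu i j k l * ξ j * ζ l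

/-- `M₀ = ⟨e₃,e₃⟩`. -/
def Mat0 (lam mu : ℝ) : Matrix (Fin 3) (Fin 3) ℝ := bil lam mu ![0,0,1] ![0,0,1]

/-- `M₁ = ⟨e₃,ω⟩ + ⟨ω,e₃⟩` for `ω = (ω₁,ω₂,0)`. -/
def Mat1 (lam mu ω1 ω2 : ℝ) : Matrix (Fin 3) (Fin 3) ℝ :=
  bil lam mu ![0,0,1] ![ω1,ω2,0] + bil lam mu ![ω1,ω2,0] ![0,0,1]

/-- `M₂ = ⟨ω,ω⟩`. -/
def Mat2 (lam mu ω1 ω2 : ℝ) : Matrix (Fin 3) (Fin 3) ℝ :=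
  bil lam mu ![ω1,ω2,0] ![ω1,ω2,0]

/-- `⟨e₃,ω⟩`. -/
def E3w (lam mu ω1 ω2 : ℝ) : Matrix (Fin 3) (Fin 3) ℝ := bil lam mu ![0,0,1] ![ω1,ω2,0]

/-- `⟨ω,e₃⟩`. -/
def wE3 (lam mu ω1 ω2 : ℝ) : Matrix (Fin 3) (Fin 3) ℝ := bil lam mu ![ω1,ω2,0] ![0,0,1]

/-- The 6×6 Stroh matrix
`K⁰ = [[−M₀⁻¹⟨e₃,ω⟩, −M₀⁻¹], [M₂ − ⟨ω,e₃⟩M₀⁻¹⟨e₃,ω⟩, −⟨ω,e₃⟩M₀⁻¹]]`. -/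
def Stroh (lam mu ω1 ω2 : ℝ) : Matrix (Fin 6) (Fin 6) ℝ :=
  Matrix.reindex finSumFinEquiv finSumFinEquiv
    (Matrix.fromBlocks
      (-((Mat0 lam mu)⁻¹ * E3w lam mu ω1 ω2)) (-(Mat0 lam mu)⁻¹)
      (Mat2 lam mu ω1 ω2 - wE3 lam mu ω1 ω2 * (Mat0 lam mu)⁻¹ * E3w lam mu ω1 ω2)
      (-(wE3 lam mu ω1 ω2 * (Mat0 lam mu)⁻¹)))

/-- Complex versions (real matrices regarded as complex matrices). -/
def Mat0c (lam mu : ℝ) : Matrix (Fin 3) (Fin 3) ℂ := (Mat0 lam mu).map Complex.ofReal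

def Mat1c (lam mu ω1 ω2 : ℝ) : Matrix (Fin 3) (Fin 3) ℂ := (Mat1 lam mu ω1 ω2).map Complex.ofReal

def Mat2c (lam mu ω1 ω2 : ℝ) : Matrix (Fin 3) (Fin 3) ℂ := (Mat2 lam mu ω1 ω2).map Complex.ofReal

def E3wc (lam mu ω1 ω2 : ℝ) : Matrix (Fin 3) (Fin 3) ℂ := (E3w lam mu ω1 ω2).map Complex.ofReal

def Strohc (lam mu ω1 ω2 : ℝ) : Matrix (Fin 6) (Fin 6) ℂ := (Stroh lam mu ω1 ω2).map Complex.ofReal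

end

set_option maxHeartbeats 1600000 in
/-- The vector `q₁⁺ = (ω₂, −ω₁, 0, −iμω₂, iμω₁, 0)` is an eigenvector of the Stroh
matrix `K⁰` for the eigenvalue `i`, and its componentwise complex conjugate `q₁⁻` is an
eigenvector for the eigenvalue `−i`. -/
theorem stmt2 (lam mu ω1 ω2 : ℝ) (hmu : 0 < mu) (hconv : 0 < 3 * lam + 2 * mu)
    (hω : ω1 ^ 2 + ω2 ^ 2 = 1) :
    Strohc lam mu ω1 ω2 *ᵥ
        (![(ω2 : ℂ), -(ω1 : ℂ), 0, -(Complex.I * mu * ω2), Complex.I * mu * ω1, 0] :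
          Fin 6 → ℂ)
      = Complex.I •
        (![(ω2 : ℂ), -(ω1 : ℂ), 0, -(Complex.I * mu * ω2), Complex.I * mu * ω1, 0] :
          Fin 6 → ℂ) ∧
    Strohc lam mu ω1 ω2 *ᵥ
        (fun j => starRingEnd ℂ
          ((![(ω2 : ℂ), -(ω1 : ℂ), 0, -(Complex.I * mu * ω2), Complex.I * mu * ω1, 0] :
            Fin 6 → ℂ) j))
      = (-Complex.I) •
        (fun j => starRingEnd ℂ
          ((![(ω2 : ℂ), -(ω1 : ℂ), 0, -(Complex.I * mu * ω2), Complex.I * mu * ω1, 0] :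
            Fin 6 → ℂ) j)) := by
  have h2 : (0:ℝ) < lam + 2*mu := by nlinarith
  have hmu' : (mu:ℝ) ≠ 0 := hmu.ne'
  have h2' : lam + 2*mu ≠ 0 := h2.ne'
  have hM0 : Mat0 lam mu = !![mu,0,0;0,mu,0;0,0,lam+2*mu] := by
    ext i k
    fin_cases i <;> fin_cases k <;>
      norm_num +decide [Mat0, bil, isoC, Fin.sum_univ_three, Matrix.cons_val_two, Matrix.tail_cons] <;> ring
  have hinv : (Mat0 lam mu)⁻¹ = !![mu⁻¹,0,0;0,mu⁻¹,0;0,0,(lam+2*mu)⁻¹] := by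
    rw [hM0]
    apply Matrix.inv_eq_right_inv
    ext i k
    fin_cases i <;> fin_cases k <;>
      simp [Matrix.mul_apply, Fin.sum_univ_three, Matrix.one_apply,
        Matrix.vecHead, Matrix.vecTail, hmu', h2']
  have hE : E3w lam mu ω1 ω2 = !![0,0,mu*ω1;0,0,mu*ω2;lam*ω1,lam*ω2,0] := by
    ext i k
    fin_cases i <;> fin_cases k <;>
      norm_num +decide [E3w, bil, isoC, Fin.sum_univ_three, Matrix.cons_val_two, Matrix.tail_cons] <;> ring
  have hW : wE3 lam mu ω1 ω2 = !![0,0,lam*ω1;0,0,lam*ω2;mu*ω1,mu*ω2,0] := by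
    ext i k
    fin_cases i <;> fin_cases k <;>
      norm_num +decide [wE3, bil, isoC, Fin.sum_univ_three, Matrix.cons_val_two, Matrix.tail_cons] <;> ring
  have hM2 : Mat2 lam mu ω1 ω2 =
      !![(lam+mu)*ω1^2+mu, (lam+mu)*ω1*ω2, 0;
         (lam+mu)*ω1*ω2, (lam+mu)*ω2^2+mu, 0; 0,0,mu] := by
    ext i k
    fin_cases i <;> fin_cases k <;>
      norm_num +decide [Mat2, bil, isoC, Fin.sum_univ_three, Matrix.cons_val_two, Matrix.tail_cons] <;> ring_nf <;>
      nlinarith [hω, congrArg (fun x => mu * x) hω]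
  have hA : -((Mat0 lam mu)⁻¹ * E3w lam mu ω1 ω2) =
      !![0,0,-ω1;0,0,-ω2;-(lam*ω1/(lam+2*mu)), -(lam*ω2/(lam+2*mu)),0] := by
    rw [hinv, hE]
    ext i k
    fin_cases i <;> fin_cases k <;>
      simp [Matrix.mul_apply, Fin.sum_univ_three, Matrix.vecHead, Matrix.vecTail] <;>
      field_simp
  have hB : -(Mat0 lam mu)⁻¹ = !![-mu⁻¹,0,0;0,-mu⁻¹,0;0,0,-(lam+2*mu)⁻¹] := by
    rw [hinv]
    ext i k
    fin_cases i <;> fin_cases k <;>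
      simp [Matrix.vecHead, Matrix.vecTail]
  have hC : Mat2 lam mu ω1 ω2 - wE3 lam mu ω1 ω2 * (Mat0 lam mu)⁻¹ * E3w lam mu ω1 ω2 =
      !![(lam+mu)*ω1^2+mu - lam^2*ω1^2/(lam+2*mu), (lam+mu)*ω1*ω2 - lam^2*ω1*ω2/(lam+2*mu), 0;
         (lam+mu)*ω1*ω2 - lam^2*ω1*ω2/(lam+2*mu), (lam+mu)*ω2^2+mu - lam^2*ω2^2/(lam+2*mu), 0;
         0,0,0] := by
    rw [hinv, hE, hW, hM2]
    ext i k
    fin_cases i <;> fin_cases k <;>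
      simp [Matrix.mul_apply, Fin.sum_univ_three, Matrix.vecHead, Matrix.vecTail] <;>
      (try field_simp) <;> (try ring_nf) <;> nlinarith [hω]
  have hD : -(wE3 lam mu ω1 ω2 * (Mat0 lam mu)⁻¹) =
      !![0,0,-(lam*ω1/(lam+2*mu)); 0,0,-(lam*ω2/(lam+2*mu)); -ω1,-ω2,0] := by
    rw [hinv, hW]
    ext i k
    fin_cases i <;> fin_cases k <;>
      simp [Matrix.mul_apply, Fin.sum_univ_three, Matrix.vecHead, Matrix.vecTail] <;>
      field_simp
  have hmuc : (mu:ℂ) ≠ 0 := by exact_mod_cast hmu'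
  have h2c : ((lam:ℂ) + 2*mu) ≠ 0 := by exact_mod_cast h2'
  have hωc : (ω1:ℂ)^2 + (ω2:ℂ)^2 = 1 := by exact_mod_cast hω
  have hS : Stroh lam mu ω1 ω2 = Matrix.reindex finSumFinEquiv finSumFinEquiv
      (Matrix.fromBlocks
        !![0,0,-ω1;0,0,-ω2;-(lam*ω1/(lam+2*mu)), -(lam*ω2/(lam+2*mu)),0]
        !![-mu⁻¹,0,0;0,-mu⁻¹,0;0,0,-(lam+2*mu)⁻¹]
        !![(lam+mu)*ω1^2+mu - lam^2*ω1^2/(lam+2*mu), (lam+mu)*ω1*ω2 - lam^2*ω1*ω2/(lam+2*mu), 0;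
           (lam+mu)*ω1*ω2 - lam^2*ω1*ω2/(lam+2*mu), (lam+mu)*ω2^2+mu - lam^2*ω2^2/(lam+2*mu), 0;
           0,0,0]
        !![0,0,-(lam*ω1/(lam+2*mu)); 0,0,-(lam*ω2/(lam+2*mu)); -ω1,-ω2,0]) := by
    rw [Stroh, hA, hB, hC, hD]
  have hv5 : ∀ (a b c d e f : ℂ), (![a,b,c,d,e,f] : Fin 6 → ℂ) 5 = f :=
    fun _ _ _ _ _ _ => rfl
  have hv4 : ∀ (a b c d e f : ℂ), (![a,b,c,d,e,f] : Fin 6 → ℂ) 4 = e :=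
    fun _ _ _ _ _ _ => rfl
  constructor <;>
  · funext j
    fin_cases j <;>
      simp [Strohc, hS, Matrix.mulVec, dotProduct, Fin.sum_univ_six,
        Matrix.reindex_apply, Matrix.submatrix_apply,
        show (finSumFinEquiv.symm (0:Fin 6) : Fin 3 ⊕ Fin 3) = Sum.inl 0 from by decide,
        show (finSumFinEquiv.symm (1:Fin 6) : Fin 3 ⊕ Fin 3) = Sum.inl 1 from by decide,
        show (finSumFinEquiv.symm (2:Fin 6) : Fin 3 ⊕ Fin 3) = Sum.inl 2 from by decide,
        show (finSumFinEquiv.symm (3:Fin 6) : Fin 3 ⊕ Fin 3) = Sum.inr 0 from by decide,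
        show (finSumFinEquiv.symm (4:Fin 6) : Fin 3 ⊕ Fin 3) = Sum.inr 1 from by decide,
        show (finSumFinEquiv.symm (5:Fin 6) : Fin 3 ⊕ Fin 3) = Sum.inr 2 from by decide,
        Matrix.fromBlocks, Matrix.vecHead, Matrix.vecTail, hv4, hv5,
        Complex.conj_ofReal, Complex.conj_I, _root_.map_mul, _root_.map_neg] <;>
      (try field_simp) <;> (try ring_nf) <;>
      (try simp [Complex.I_sq]) <;> (try ring_nf)
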